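/- Let D be a dominion of player α in a parity game with winning strategy σ, and let π ∈ Plays(D, σ) be any play in D consistent with σ. Then the pair (inf(π), σ restricted to inf(π)) is a tangle whose highest priority max{pr(v) : v ∈ inf(π)} has α's parity. -/

import Mathlib

open scoped Classical

/-- A parity game on a finite vertex type `V`.  Player `false` is Even and
player `true` is Odd; `owner v` is the player controlling vertex `v`,
`edge` is the (left-total) move relation and `pr` assigns priorities. -/
structure ParityGame (V : Type) [Fintype V] where
  owner : V → Bool
  edge : V → V → Prop
  total : ∀ v, ∃ w, edge v w
  pr : V → ℕ

namespace ParityGame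

variable {V : Type} [Fintype V] (G : ParityGame V)

/-- The player whose parity matches the priority `p` (`false` = Even, `true` = Odd). -/
def playerOf (p : ℕ) : Bool := decide (p % 2 = 1)

/-- A play is an infinite sequence of vertices consistent with the edge relation. -/
def IsPlay (π : ℕ → V) : Prop := ∀ i, G.edge (π i) (π (i + 1))

/-- The set of vertices occurring infinitely often in `π`. -/
def infOcc (π : ℕ → V) : Set V := {v | ∀ n : ℕ, ∃ m, n ≤ m ∧ π m = v}

/-- The highest priority of a vertex in `S`. -/
noncomputable def maxPr (S : Set V) : ℕ := sSup (G.pr '' S)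

/-- Player `α` wins the play `π` iff the highest priority occurring infinitely
often in `π` has `α`'s parity. -/
def Wins (α : Bool) (π : ℕ → V) : Prop := playerOf (G.maxPr (infOcc π)) = α

/-- A (positional, partial) strategy for player `α`. -/
def IsStrategy (α : Bool) (σ : V → Option V) : Prop :=
  ∀ v w, σ v = some w → G.owner v = α ∧ G.edge v w

/-- A play is consistent with the strategy `σ`. -/
def Consistent (σ : V → Option V) (π : ℕ → V) : Prop :=
  ∀ i w, σ (π i) = some w → π (i + 1) = w

/-- All plays starting in `U` that are consistent with `σ`. -/
def PlaysFrom (U : Set V) (σ : V → Option V) : Set (ℕ → V) :=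
  {π | G.IsPlay π ∧ π 0 ∈ U ∧ Consistent σ π}

/-- `U` is closed with respect to player `α`: every `α`-vertex of `U` has a
successor in `U` and every opponent vertex of `U` has all successors in `U`. -/
def ClosedFor (α : Bool) (U : Set V) : Prop :=
  (∀ v ∈ U, G.owner v = α → ∃ w ∈ U, G.edge v w) ∧
  (∀ v ∈ U, G.owner v ≠ α → ∀ w, G.edge v w → w ∈ U)

/-- `D` is an `α`-dominion with (winning) strategy `σ`: `D` is closed for `α`,
`σ` is a strategy of `α` defined on all `α`-vertices of `D` with values in `D`,
and `α` wins every consistent play from `D`. -/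
def IsDominionWith (α : Bool) (D : Set V) (σ : V → Option V) : Prop :=
  G.ClosedFor α D ∧ G.IsStrategy α σ ∧
  (∀ v ∈ D, G.owner v = α → ∃ w ∈ D, σ v = some w) ∧
  ∀ π ∈ G.PlaysFrom D σ, G.Wins α π

/-- `D` is an `α`-dominion. -/
def IsDominion (α : Bool) (D : Set V) : Prop := ∃ σ, G.IsDominionWith α D σ

/-- The value of a play: the highest priority occurring infinitely often. -/
noncomputable def playValue (π : ℕ → V) : ℕ := G.maxPr (infOcc π)

/-- `D` is a `p`-dominion with winning strategy `σ`: a dominion such that `p` is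
the maximum, over all consistent plays from `D`, of the highest priority seen
infinitely often. -/
def IsPDominionWith (α : Bool) (p : ℕ) (D : Set V) (σ : V → Option V) : Prop :=
  G.IsDominionWith α D σ ∧ IsGreatest (G.playValue '' G.PlaysFrom D σ) p

/-- `D` is a `p`-dominion for player `α`. -/
def IsPDominion (α : Bool) (p : ℕ) (D : Set V) : Prop := ∃ σ, G.IsPDominionWith α p D σ

/-- The edges of the subgame `G[U,σ]` induced by `U` and the strategy `σ`. -/
def subEdge (U : Set V) (σ : V → Option V) (u v : V) : Prop :=
  u ∈ U ∧ v ∈ U ∧ G.edge u v ∧ (σ u = none ∨ σ u = some v)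

/-- `G[U,σ]` is strongly connected. -/
def StronglyConnected (U : Set V) (σ : V → Option V) : Prop :=
  ∀ u ∈ U, ∀ v ∈ U, Relation.ReflTransGen (G.subEdge U σ) u v

/-- A cycle of `G[U,σ]`: from `v` through the list `l` back to `v`. -/
def IsCycle (U : Set V) (σ : V → Option V) (v : V) (l : List V) : Prop :=
  List.Chain (G.subEdge U σ) v (l ++ [v])

/-- Player `α` wins all cycles of `G[U,σ]`: the maximum priority on every cycle
has `α`'s parity. -/
def WinsAllCycles (α : Bool) (U : Set V) (σ : V → Option V) : Prop :=
  ∀ v l, G.IsCycle U σ v l → playerOf (G.maxPr {x | x ∈ v :: l}) = α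

/-- `(U, σ)` is a tangle: `U` is nonempty, `σ` is a strategy for the player `α`
of the parity of the highest priority of `U`, defined exactly on the
`α`-vertices of `U` with values in `U`, the subgame `G[U,σ]` is strongly
connected, and player `α` wins all cycles of `G[U,σ]`. -/
def IsTangle (U : Set V) (σ : V → Option V) : Prop :=
  U.Nonempty ∧
  (∀ v w, σ v = some w → v ∈ U ∧ w ∈ U ∧ G.owner v = playerOf (G.maxPr U) ∧ G.edge v w) ∧
  (∀ v ∈ U, G.owner v = playerOf (G.maxPr U) → (σ v).isSome) ∧
  G.StronglyConnected U σ ∧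
  G.WinsAllCycles (playerOf (G.maxPr U)) U σ

/-- The escapes `E_T(T)` of a tangle with vertex set `U`: the successors outside
`U` of the opponent's vertices in `U`. -/
def escapes (U : Set V) : Set V :=
  {v | v ∉ U ∧ ∃ u ∈ U, G.owner u ≠ playerOf (G.maxPr U) ∧ G.edge u v}

/-- The restriction of a strategy to a set `U`. -/
noncomputable def restrict (σ : V → Option V) (U : Set V) : V → Option V :=
  fun v => if v ∈ U then σ v else none

/-- The attractor of `A` for player `α`: the least fixpoint of
`Z := A ∪ {v ∈ V_α | E(v) ∩ Z ≠ ∅} ∪ {v ∈ V_ᾱ | E(v) ⊆ Z}`. -/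
inductive Attr (α : Bool) (A : Set V) : V → Prop
  | base : ∀ v, v ∈ A → Attr α A v
  | step : ∀ v w, G.owner v = α → G.edge v w → Attr α A w → Attr α A v
  | forced : ∀ v, G.owner v ≠ α → (∀ w, G.edge v w → Attr α A w) → Attr α A v

/-- The attractor of `A` for player `α`, as a set. -/
def attrSet (α : Bool) (A : Set V) : Set V := {v | G.Attr α A v}

/-- The tangle attractor of `A` for player `α` with tangle set `TT`: the least
fixpoint additionally attracting all vertices of `α`-tangles of `TT` whose
escapes all lie in the attracting set. -/
inductive TAttr (α : Bool) (TT : Set (Set V × (V → Option V))) (A : Set V) : V → Prop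
  | base : ∀ v, v ∈ A → TAttr α TT A v
  | step : ∀ v w, G.owner v = α → G.edge v w → TAttr α TT A w → TAttr α TT A v
  | forced : ∀ v, G.owner v ≠ α → (∀ w, G.edge v w → TAttr α TT A w) → TAttr α TT A v
  | tangle : ∀ (U : Set V) (τ : V → Option V) (v : V), (U, τ) ∈ TT →
      G.IsTangle U τ → playerOf (G.maxPr U) = α →
      (∀ w ∈ G.escapes U, TAttr α TT A w) → v ∈ U → TAttr α TT A v

/-- The tangle attractor of `A` for player `α`, as a set. -/
def tattrSet (α : Bool) (TT : Set (Set V × (V → Option V))) (A : Set V) : Set V :=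
  {v | G.TAttr α TT A v}

end ParityGame

namespace ParityGame

variable {V : Type} [Fintype V]


private lemma chain_getD' {β : Type*} {R : β → β → Prop} (l : List β) (a d : β)
    (h : List.Chain R a l) :
    ∀ i, i + 1 < (a :: l).length → R ((a :: l).getD i d) ((a :: l).getD (i+1) d) := by
  induction l generalizing a with
  | nil => intro i hi; simp at hi
  | cons b t ih =>
    rcases List.chain_cons.mp h with ⟨hab, hbt⟩
    intro i hi
    cases i with
    | zero => simpa using hab
    | succ i =>
      have := ih b hbt i (by simp only [List.length_cons] at hi ⊢; omega)
      simpa using this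

private lemma getD_append_length' {β : Type*} (l : List β) (a d : β) :
    (l ++ [a]).getD l.length d = a := by
  induction l with
  | nil => rfl
  | cons x t ih => simpa using ih

lemma infOcc_nonempty (π : ℕ → V) : (infOcc π).Nonempty := by
  obtain ⟨v, hv⟩ := Finite.exists_infinite_fiber π
  refine ⟨v, fun n => ?_⟩
  by_contra hcon
  push_neg at hcon
  have hsub : π ⁻¹' {v} ⊆ Set.Iio n := by
    intro m hm
    simp only [Set.mem_preimage, Set.mem_singleton_iff] at hm
    simp only [Set.mem_Iio]
    by_contra h'
    exact hcon m (by omega) hm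
  have hfin : (π ⁻¹' {v}).Finite := (Set.finite_Iio n).subset hsub
  have hinf : (π ⁻¹' {v}).Infinite := (Set.infinite_coe_iff (s := π ⁻¹' {v})).mp hv
  exact hinf hfin

lemma eventually_infOcc (π : ℕ → V) : ∃ N, ∀ k, N ≤ k → π k ∈ infOcc π := by
  have hch : ∀ v : V, ∃ N : ℕ, v ∈ infOcc π ∨ ∀ m, N ≤ m → π m ≠ v := by
    intro v
    by_cases hv : v ∈ infOcc π
    · exact ⟨0, Or.inl hv⟩
    · have hv' : ¬ ∀ n : ℕ, ∃ m, n ≤ m ∧ π m = v := hv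
      push_neg at hv'
      obtain ⟨n, hn⟩ := hv'
      exact ⟨n, Or.inr hn⟩
  choose f hf using hch
  refine ⟨Finset.univ.sup f, fun k hk => ?_⟩
  rcases hf (π k) with h | h
  · exact h
  · exact absurd rfl (h k (le_trans (Finset.le_sup (Finset.mem_univ _)) hk))

lemma infOcc_succ {π : ℕ → V} {σ : V → Option V} (hcons : Consistent σ π)
    {v w : V} (hv : v ∈ infOcc π) (hw : σ v = some w) : w ∈ infOcc π := by
  intro n
  obtain ⟨m, hm, hmv⟩ := hv n
  exact ⟨m + 1, le_trans hm (Nat.le_succ m), hcons m w (by rw [hmv]; exact hw)⟩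

lemma play_stays {G : ParityGame V} {α : Bool} {D : Set V} {σ : V → Option V}
    (h : G.IsDominionWith α D σ) {π : ℕ → V} (hπ : π ∈ G.PlaysFrom D σ) :
    ∀ i, π i ∈ D := by
  obtain ⟨hclosed, hstrat, hdef, -⟩ := h
  obtain ⟨hplay, h0, hcons⟩ := hπ
  intro i
  induction i with
  | zero => exact h0
  | succ i ih =>
    by_cases ho : G.owner (π i) = α
    · obtain ⟨w, hwD, hw⟩ := hdef (π i) ih ho
      rw [hcons i w hw]; exact hwD
    · exact hclosed.2 (π i) ih ho (π (i+1)) (hplay i)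


/-- for any play `π` of a dominion `D` consistent with the winning
strategy `σ`, `(inf(π), σ|inf(π))` is a tangle whose highest priority has `α`'s
parity. -/
theorem infOcc_is_tangle (G : ParityGame V) (α : Bool) (D : Set V)
    (σ : V → Option V) (h : G.IsDominionWith α D σ)
    (π : ℕ → V) (hπ : π ∈ G.PlaysFrom D σ) :
    G.IsTangle (infOcc π) (restrict σ (infOcc π)) ∧
      playerOf (G.maxPr (infOcc π)) = α := by
  obtain ⟨hclosed, hstrat, hdef, hwinsall⟩ := h
  obtain ⟨hplay, h0, hcons⟩ := hπ
  have hD : ∀ i, π i ∈ D :=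
    play_stays ⟨hclosed, hstrat, hdef, hwinsall⟩ ⟨hplay, h0, hcons⟩
  have hUD : infOcc π ⊆ D := by
    rintro v hv
    obtain ⟨m, -, rfl⟩ := hv 0
    exact hD m
  have hα : playerOf (G.maxPr (infOcc π)) = α := hwinsall π ⟨hplay, h0, hcons⟩
  have hσ'U : ∀ v ∈ infOcc π, restrict σ (infOcc π) v = σ v := fun v hv => if_pos hv
  -- strategy property
  have hstrat' : ∀ v w, restrict σ (infOcc π) v = some w →
      v ∈ infOcc π ∧ w ∈ infOcc π ∧
        G.owner v = playerOf (G.maxPr (infOcc π)) ∧ G.edge v w := by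
    intro v w hvw
    have hvU : v ∈ infOcc π := by
      by_contra hvU
      rw [restrict, if_neg hvU] at hvw
      exact Option.some_ne_none w hvw.symm
    rw [hσ'U v hvU] at hvw
    obtain ⟨how, hew⟩ := hstrat v w hvw
    exact ⟨hvU, infOcc_succ hcons hvU hvw, how.trans hα.symm, hew⟩
  -- defined on all α-vertices
  have hdef' : ∀ v ∈ infOcc π, G.owner v = playerOf (G.maxPr (infOcc π)) →
      (restrict σ (infOcc π) v).isSome := by
    intro v hv how
    obtain ⟨w, -, hw⟩ := hdef v (hUD hv) (how.trans hα)
    rw [hσ'U v hv, hw]; rfl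
  -- strong connectivity
  obtain ⟨N, hN⟩ := eventually_infOcc π
  have hstep : ∀ k, N ≤ k →
      G.subEdge (infOcc π) (restrict σ (infOcc π)) (π k) (π (k+1)) := by
    intro k hk
    refine ⟨hN k hk, hN (k+1) (le_trans hk (Nat.le_succ k)), hplay k, ?_⟩
    rw [hσ'U _ (hN k hk)]
    cases hσ : σ (π k) with
    | none => exact Or.inl rfl
    | some w => exact Or.inr (by rw [hcons k w hσ])
  have hconn : G.StronglyConnected (infOcc π) (restrict σ (infOcc π)) := by
    intro u hu v hv
    obtain ⟨i, hNi, hiu⟩ := hu N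
    obtain ⟨j, hij, hjv⟩ := hv i
    have hpath : ∀ d, Relation.ReflTransGen
        (G.subEdge (infOcc π) (restrict σ (infOcc π))) (π i) (π (i + d)) := by
      intro d
      induction d with
      | zero => exact Relation.ReflTransGen.refl
      | succ d ih =>
        exact ih.tail (hstep (i + d) (le_trans hNi (Nat.le_add_right i d)))
    have h2 := hpath (j - i)
    rw [Nat.add_sub_cancel' hij, hiu, hjv] at h2
    exact h2
  -- wins all cycles
  have hcyc : G.WinsAllCycles (playerOf (G.maxPr (infOcc π)))
      (infOcc π) (restrict σ (infOcc π)) := by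
    rw [hα]
    intro v l hc
    have npos : 0 < l.length + 1 := Nat.succ_pos _
    have hkey : ∀ i, i < l.length + 1 →
        G.subEdge (infOcc π) (restrict σ (infOcc π))
          ((v :: l).getD i v) ((v :: l).getD ((i+1) % (l.length + 1)) v) := by
      intro i hi
      have h1 := chain_getD' (l ++ [v]) v v hc i
        (by simp only [List.length_cons, List.length_append, List.length_singleton]; omega)
      rw [show v :: (l ++ [v]) = (v :: l) ++ [v] from rfl] at h1
      rw [List.getD_append (v :: l) [v] v i (by simp only [List.length_cons]; omega)] at h1
      rcases Nat.lt_or_ge (i+1) (l.length + 1) with h2 | h2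
      · rw [List.getD_append (v :: l) [v] v (i+1) (by simp only [List.length_cons]; omega)] at h1
        rw [Nat.mod_eq_of_lt h2]
        exact h1
      · have h3 : i + 1 = l.length + 1 := by omega
        have h4 : ((v :: l) ++ [v]).getD (l.length + 1) v = v := by
          simpa using getD_append_length' (v :: l) v v
        rw [h3, h4] at h1
        rw [h3, Nat.mod_self]
        exact h1
    set ρ : ℕ → V := fun k => (v :: l).getD (k % (l.length + 1)) v with hρ
    have hρstep : ∀ k, G.subEdge (infOcc π) (restrict σ (infOcc π)) (ρ k) (ρ (k+1)) := by
      intro k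
      have hmod : (k+1) % (l.length + 1) = (k % (l.length + 1) + 1) % (l.length + 1) := by
        simp [Nat.add_mod]
      have hk := hkey (k % (l.length + 1)) (Nat.mod_lt k npos)
      show G.subEdge (infOcc π) (restrict σ (infOcc π))
        ((v :: l).getD (k % (l.length + 1)) v)
        ((v :: l).getD ((k+1) % (l.length + 1)) v)
      rw [hmod]
      exact hk
    have hρU : ∀ k, ρ k ∈ infOcc π := fun k => (hρstep k).1
    have hρplay : G.IsPlay ρ := fun k => (hρstep k).2.2.1
    have hρcons : Consistent σ ρ := by
      intro k w hw
      rcases (hρstep k).2.2.2 with h' | h'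
      · rw [hσ'U _ (hρU k), hw] at h'
        exact absurd h' (Option.some_ne_none w)
      · rw [hσ'U _ (hρU k), hw] at h'
        exact (Option.some.inj h').symm
    have hwin := hwinsall ρ ⟨hρplay, hUD (hρU 0), hρcons⟩
    have hset : infOcc ρ = {x | x ∈ v :: l} := by
      ext x
      constructor
      · intro hx
        obtain ⟨m, -, rfl⟩ := hx 0
        show (v :: l).getD (m % (l.length + 1)) v ∈ v :: l
        have hlt : m % (l.length + 1) < (v :: l).length := Nat.mod_lt m npos
        rw [List.getD_eq_getElem _ _ hlt]
        exact List.getElem_mem hlt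
      · intro hx
        obtain ⟨i, hlt, hgi⟩ := List.getElem_of_mem hx
        intro m
        refine ⟨i + m * (l.length + 1), ?_, ?_⟩
        · have : m ≤ m * (l.length + 1) := Nat.le_mul_of_pos_right m npos
          omega
        · show (v :: l).getD ((i + m * (l.length + 1)) % (l.length + 1)) v = x
          have hlt' : i < l.length + 1 := by simpa using hlt
          rw [Nat.add_mul_mod_self_right, Nat.mod_eq_of_lt hlt',
            List.getD_eq_getElem _ _ hlt]
          exact hgi
    have hwin2 : playerOf (G.maxPr (infOcc ρ)) = α := hwin
    rw [hset] at hwin2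
    exact hwin2
  exact ⟨⟨infOcc_nonempty π, hstrat', hdef', hconn, hcyc⟩, hα⟩


end ParityGame
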